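/- Let τ_n be as follows: with probability 1/n, τ_n is a sum of 2n i.i.d. Exp(1) variables, and with probability 1 − 1/n it is a sum of (n+1) i.i.d. Exp(1) variables; let τ_n^{(1)},…,τ_n^{(n)} be n independent copies and T_n = max_i τ_n^{(i)}. Then for fixed s: lim_{n→∞} P(T_n > ns) = 1 if s < 1, = 1 − e^{−1} if 1 < s < 2, and = 0 if s > 2. -/

import Mathlib

open MeasureTheory ProbabilityTheory Filter

/-- The law of the hitting time `τ_n`: with probability `1/n` a `Gamma(2n,1)`
distribution and with probability `1 - 1/n` a `Gamma(n+1,1)` distribution. -/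
noncomputable def mixtureLaw (n : ℕ) : Measure ℝ :=
  (ENNReal.ofReal (1 / n)) • gammaMeasure (2 * n) 1 +
    (ENNReal.ofReal (1 - 1 / n)) • gammaMeasure (n + 1) 1

open Set
open scoped ENNReal NNReal

lemma aux_chernoff {a b t : ℝ} (ha : 0 < a) (hb : 0 < b) (S : Set ℝ)
    (hS : MeasurableSet S) (h : ∀ x ∈ S, 0 ≤ x → (b - 1) * x ≤ (b - 1) * t) :
    gammaMeasure a 1 S ≤ ENNReal.ofReal (b ^ (-a) * Real.exp ((b - 1) * t)) := by
  set C : ℝ := b ^ (-a) * Real.exp ((b - 1) * t) with hC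
  have hGpos : 0 < Real.Gamma a := Real.Gamma_pos_of_pos ha
  have hCpos : 0 < C := by positivity
  have key : ∀ x ∈ S, gammaPDF a 1 x ≤ ENNReal.ofReal C * gammaPDF a b x := by
    intro x hx
    rcases lt_or_ge x 0 with h0 | h0
    · simp [gammaPDF_of_neg h0]
    · rw [gammaPDF_of_nonneg h0, gammaPDF_of_nonneg h0, ← ENNReal.ofReal_mul hCpos.le]
      apply ENNReal.ofReal_le_ofReal
      have hexp : Real.exp (-(1 * x)) = Real.exp ((b - 1) * x) * Real.exp (-(b * x)) := by
        rw [← Real.exp_add]; ring_nf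
      have hbx : Real.exp ((b - 1) * x) ≤ Real.exp ((b - 1) * t) :=
        Real.exp_le_exp.mpr (h x hx h0)
      have hX : 0 ≤ x ^ (a - 1) := Real.rpow_nonneg h0 _
      have hb1 : b ^ (-a) * b ^ a = 1 := by
        rw [← Real.rpow_add hb]; simp
      calc (1:ℝ) ^ a / Real.Gamma a * x ^ (a - 1) * Real.exp (-(1 * x))
          = Real.exp ((b - 1) * x) * (1 / Real.Gamma a * (x ^ (a - 1) * Real.exp (-(b * x)))) := by
            rw [Real.one_rpow, hexp]; ring
        _ ≤ Real.exp ((b - 1) * t) * (1 / Real.Gamma a * (x ^ (a - 1) * Real.exp (-(b * x)))) := by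
            apply mul_le_mul_of_nonneg_right hbx (by positivity)
        _ = C * (b ^ a / Real.Gamma a * x ^ (a - 1) * Real.exp (-(b * x))) := by
            rw [hC]
            linear_combination (-(Real.exp ((b - 1) * t) * x ^ (a - 1) *
              Real.exp (-(b * x)) / Real.Gamma a)) * hb1
  have hmeas : Measurable (gammaPDF a b) :=
    (measurable_gammaPDFReal a b).ennreal_ofReal
  calc gammaMeasure a 1 S = ∫⁻ x in S, gammaPDF a 1 x := by
        rw [gammaMeasure, withDensity_apply _ hS]
    _ ≤ ∫⁻ x in S, ENNReal.ofReal C * gammaPDF a b x := setLIntegral_mono (hmeas.const_mul _) key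
    _ = ENNReal.ofReal C * ∫⁻ x in S, gammaPDF a b x := lintegral_const_mul _ hmeas
    _ ≤ ENNReal.ofReal C * ∫⁻ x, gammaPDF a b x := by
        gcongr
        exact Measure.restrict_le_self
    _ = ENNReal.ofReal C := by rw [lintegral_gammaPDF_eq_one ha hb, mul_one]

lemma aux_toReal {a : ℝ} {S : Set ℝ} {C : ℝ} (hC : 0 ≤ C)
    (h : gammaMeasure a 1 S ≤ ENNReal.ofReal C) :
    (gammaMeasure a 1 S).toReal ≤ C := by
  rw [← ENNReal.toReal_ofReal hC]
  exact ENNReal.toReal_mono ENNReal.ofReal_ne_top h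

lemma aux_Iic {a t l : ℝ} (ha : 0 < a) (hl : 0 < l) :
    (gammaMeasure a 1 (Iic t)).toReal ≤ (1 + l) ^ (-a) * Real.exp (l * t) := by
  have hb : (0:ℝ) < 1 + l := by linarith
  have h := aux_chernoff (t := t) ha hb (Iic t) measurableSet_Iic (fun x hx h0 => by
    have : x ≤ t := hx
    nlinarith)
  simp only [add_sub_cancel_left] at h
  exact aux_toReal (by positivity) h

lemma aux_Ioi {a t l : ℝ} (ha : 0 < a) (hl0 : 0 < l) (hl1 : l < 1) :
    (gammaMeasure a 1 (Ioi t)).toReal ≤ (1 - l) ^ (-a) * Real.exp (-(l * t)) := by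
  have hb : (0:ℝ) < 1 - l := by linarith
  have h := aux_chernoff (t := t) ha hb (Ioi t) measurableSet_Ioi (fun x hx h0 => by
    have : t < x := hx
    nlinarith)
  have e : (1 - l - 1) * t = -(l * t) := by ring
  rw [e] at h
  exact aux_toReal (by positivity) h

lemma aux_exists_lt {s : ℝ} (hs : s < 1) :
    ∃ l : ℝ, 0 < l ∧ Real.exp (l * s) < 1 + l := by
  rcases le_or_gt s 0 with h | h
  · refine ⟨1, one_pos, ?_⟩
    have : Real.exp (1 * s) ≤ Real.exp 0 := Real.exp_le_exp.mpr (by linarith)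
    rw [Real.exp_zero] at this; linarith
  · refine ⟨(1 - s) / (2 * s), div_pos (by linarith) (by linarith), ?_⟩
    have hls : (1 - s) / (2 * s) * s = (1 - s) / 2 := by field_simp
    rw [hls]
    set u : ℝ := (1 - s) / 2 with hu
    have hu0 : 0 < u := by rw [hu]; linarith
    have hu1 : u < 1 := by rw [hu]; linarith
    have h2 : 1 - u ≤ Real.exp (-u) := by
      have := Real.add_one_le_exp (-u); linarith
    have h3 : Real.exp u ≤ 1 / (1 - u) := by
      rw [le_div_iff₀ (by linarith)]
      calc Real.exp u * (1 - u) ≤ Real.exp u * Real.exp (-u) := by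
            apply mul_le_mul_of_nonneg_left h2 (Real.exp_pos u).le
        _ = 1 := by rw [← Real.exp_add]; simp
    have h5 : 1 / (1 - u) = 2 / (1 + s) := by
      rw [hu]; rw [div_eq_div_iff (by linarith) (by linarith)]; ring
    have h6 : 2 / (1 + s) < (1 + s) / (2 * s) := by
      rw [div_lt_div_iff₀ (by linarith) (by linarith)]
      nlinarith [sq_nonneg (1 - s)]
    have h7 : 1 + (1 - s) / (2 * s) = (1 + s) / (2 * s) := by
      field_simp; ring
    rw [h7]
    calc Real.exp u ≤ 1 / (1 - u) := h3
      _ = 2 / (1 + s) := h5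
      _ < (1 + s) / (2 * s) := h6

lemma aux_exists_gt {s : ℝ} (hs : 1 < s) :
    ∃ l : ℝ, 0 < l ∧ l < 1 ∧ Real.exp (-(l * s)) < 1 - l := by
  have hs0 : (0:ℝ) < s := by linarith
  refine ⟨(s - 1) / (2 * s), div_pos (by linarith) (by linarith),
    by rw [div_lt_one (by linarith)]; linarith, ?_⟩
  set l : ℝ := (s - 1) / (2 * s) with hl
  have hl0 : 0 < l := div_pos (by linarith) (by linarith)
  have hl1 : l < 1/2 := by rw [hl, div_lt_iff₀ (by linarith)]; linarith
  have hne : (1:ℝ) - l ≠ 0 := by linarith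
  have hsl : s * l = (s - 1) / 2 := by rw [hl]; field_simp
  have key : 1 / (1 - l) < Real.exp (l * s) := by
    have h1 : 1 + l / (1 - l) ≤ Real.exp (l / (1 - l)) := Real.add_one_le_exp _ |>.trans_eq' (by ring)
    have h2 : 1 / (1 - l) = 1 + l / (1 - l) := by field_simp; ring
    have h3 : l / (1 - l) < l * s := by
      rw [div_lt_iff₀ (by linarith)]
      have hsl2 : l * (s * l) = l * ((s - 1) / 2) := by rw [hsl]
      nlinarith [mul_pos hl0 (show (0:ℝ) < s - 1 by linarith)]
    calc 1 / (1 - l) ≤ Real.exp (l / (1 - l)) := h2 ▸ h1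
      _ < Real.exp (l * s) := Real.exp_lt_exp.mpr h3
  rw [Real.exp_neg]
  rw [one_div] at key
  calc (Real.exp (l * s))⁻¹ < ((1 - l)⁻¹)⁻¹ := by
        apply inv_strictAnti₀ (inv_pos.mpr (by linarith)) key
    _ = 1 - l := inv_inv _

lemma aux_pow_exp {p : ℕ → ℝ} {c : ℝ} (h1 : ∀ᶠ n in atTop, p n ≤ 1)
    (h : Tendsto (fun n : ℕ => (n:ℝ) * p n) atTop (nhds c)) :
    Tendsto (fun n => (1 - p n) ^ n) atTop (nhds (Real.exp (-c))) := by
  have hp0 : Tendsto p atTop (nhds 0) := by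
    have h2 : Tendsto (fun n : ℕ => ((n:ℝ) * p n) * (1/(n:ℝ))) atTop (nhds (c * 0)) :=
      h.mul tendsto_one_div_atTop_nhds_zero_nat
    rw [mul_zero] at h2
    apply h2.congr'
    filter_upwards [eventually_ge_atTop 1] with n hn
    have : (n:ℝ) ≠ 0 := Nat.cast_ne_zero.mpr (by omega)
    field_simp
  have hupper : Tendsto (fun n : ℕ => Real.exp (-((n:ℝ) * p n))) atTop (nhds (Real.exp (-c))) :=
    (Real.continuous_exp.tendsto _).comp h.neg
  have hlower : Tendsto (fun n : ℕ => Real.exp (-((n:ℝ) * p n) * (1 - p n)⁻¹)) atTop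
      (nhds (Real.exp (-c))) := by
    have hq : Tendsto (fun n : ℕ => -((n:ℝ) * p n) * (1 - p n)⁻¹) atTop (nhds (-c * (1 - 0)⁻¹)) :=
      h.neg.mul ((tendsto_const_nhds.sub hp0).inv₀ (by norm_num))
    simp only [sub_zero, inv_one, mul_one] at hq
    exact (Real.continuous_exp.tendsto _).comp hq
  apply tendsto_of_tendsto_of_tendsto_of_le_of_le' hlower hupper
  · filter_upwards [hp0.eventually_le_const (show (0:ℝ) < 1/2 by norm_num)] with n hn
    have hp1 : 1 - p n > 0 := by linarith
    have e1 : Real.exp (-(p n / (1 - p n))) ≤ 1 - p n := by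
      have h1' : 1 + p n / (1 - p n) ≤ Real.exp (p n / (1 - p n)) :=
        (Real.add_one_le_exp _).trans_eq' (by ring)
      have h2' : 1 / (1 - p n) = 1 + p n / (1 - p n) := by field_simp; ring
      rw [Real.exp_neg]
      rw [inv_le_comm₀ (Real.exp_pos _) hp1]
      calc (1 - p n)⁻¹ = 1 + p n / (1 - p n) := by rw [← one_div, h2']
        _ ≤ Real.exp (p n / (1 - p n)) := h1'
    calc Real.exp (-((n:ℝ) * p n) * (1 - p n)⁻¹)
        = Real.exp (-(p n / (1 - p n))) ^ n := by
          rw [← Real.exp_nat_mul]; congr 1; field_simp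
      _ ≤ (1 - p n) ^ n := pow_le_pow_left₀ (Real.exp_pos _).le e1 n
  · filter_upwards [h1] with n hn
    calc (1 - p n) ^ n ≤ Real.exp (-(p n)) ^ n := by
          apply pow_le_pow_left₀ (by linarith)
          have := Real.add_one_le_exp (-(p n)); linarith
      _ = Real.exp (-((n:ℝ) * p n)) := by rw [← Real.exp_nat_mul]; congr 1; ring

lemma mixtureLaw_isProb (n : ℕ) (hn : 1 ≤ n) : IsProbabilityMeasure (mixtureLaw n) := by
  have hn' : (0:ℝ) < n := by exact_mod_cast hn
  have i2 : IsProbabilityMeasure (gammaMeasure (2 * (n:ℝ)) 1) :=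
    isProbabilityMeasure_gammaMeasure (by linarith) one_pos
  have i1 : IsProbabilityMeasure (gammaMeasure ((n:ℝ) + 1) 1) :=
    isProbabilityMeasure_gammaMeasure (by linarith) one_pos
  constructor
  rw [mixtureLaw, Measure.add_apply, Measure.smul_apply, Measure.smul_apply, smul_eq_mul,
    smul_eq_mul, measure_univ, measure_univ, mul_one, mul_one,
    ← ENNReal.ofReal_add (by positivity) (by
      have : 1/(n:ℝ) ≤ 1 := by rw [div_le_one hn']; exact_mod_cast hn
      linarith)]
  rw [show 1/(n:ℝ) + (1 - 1/(n:ℝ)) = 1 by ring, ENNReal.ofReal_one]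

lemma mixtureLaw_decomp (n : ℕ) (hn : 1 ≤ n) (S : Set ℝ) :
    (mixtureLaw n S).toReal = 1/(n:ℝ) * (gammaMeasure (2*(n:ℝ)) 1 S).toReal
      + (1 - 1/(n:ℝ)) * (gammaMeasure ((n:ℝ)+1) 1 S).toReal := by
  have hn' : (0:ℝ) < n := by exact_mod_cast hn
  haveI i2 : IsProbabilityMeasure (gammaMeasure (2 * (n:ℝ)) 1) :=
    isProbabilityMeasure_gammaMeasure (by linarith) one_pos
  haveI i1 : IsProbabilityMeasure (gammaMeasure ((n:ℝ) + 1) 1) :=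
    isProbabilityMeasure_gammaMeasure (by linarith) one_pos
  have hle : 1/(n:ℝ) ≤ 1 := by rw [div_le_one hn']; exact_mod_cast hn
  rw [mixtureLaw, Measure.add_apply, Measure.smul_apply, Measure.smul_apply, smul_eq_mul,
    smul_eq_mul, ENNReal.toReal_add (by finiteness) (by finiteness), ENNReal.toReal_mul,
    ENNReal.toReal_mul, ENNReal.toReal_ofReal (by positivity),
    ENNReal.toReal_ofReal (by linarith)]

lemma aux_key {α : Type*} [MeasurableSpace α] (μ : Measure α) [IsProbabilityMeasure μ]
    (n : ℕ) (hn : 1 ≤ n) (f : Fin n → α → ℝ) (hmeas : ∀ i, Measurable (f i))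
    (hindep : iIndepFun f μ)
    (hlaw : ∀ i, μ.map (f i) = mixtureLaw n) (c : ℝ) :
    (μ {ω | c < ⨆ i, f i ω}).toReal = 1 - ((mixtureLaw n (Iic c)).toReal) ^ n := by
  haveI := mixtureLaw_isProb n hn
  haveI : Nonempty (Fin n) := Fin.pos_iff_nonempty.mp hn
  have hset : {ω | c < ⨆ i, f i ω} = (⋂ i, (f i)⁻¹' (Iic c))ᶜ := by
    ext ω
    simp only [Set.mem_setOf_eq, Set.mem_compl_iff, Set.mem_iInter, Set.mem_preimage,
      Set.mem_Iic, not_forall, not_le]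
    constructor
    · intro hlt
      by_contra hc
      push_neg at hc
      exact absurd (ciSup_le_iff (Set.Finite.bddAbove (Set.finite_range _)) |>.mpr hc)
        (not_le.mpr hlt)
    · rintro ⟨i, hi⟩
      exact hi.trans_le (le_ciSup (f := fun j => f j ω) (Set.Finite.bddAbove (Set.finite_range _)) i)
  have hmeasI : MeasurableSet (⋂ i, (f i)⁻¹' (Iic c)) :=
    MeasurableSet.iInter fun i => (hmeas i) measurableSet_Iic
  have hval : ∀ i, μ ((f i)⁻¹' (Iic c)) = mixtureLaw n (Iic c) := by
    intro i
    rw [← Measure.map_apply (hmeas i) measurableSet_Iic, hlaw i]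
  have hprod : μ (⋂ i, (f i)⁻¹' (Iic c)) = (mixtureLaw n (Iic c)) ^ n := by
    rw [hindep.meas_iInter fun i => ⟨Iic c, measurableSet_Iic, rfl⟩]
    simp only [hval]
    rw [Finset.prod_const, Finset.card_univ, Fintype.card_fin]
  have hle1 : mixtureLaw n (Iic c) ≤ 1 := prob_le_one
  rw [hset, prob_compl_eq_one_sub hmeasI, hprod,
    ENNReal.toReal_sub_of_le (pow_le_one' hle1 n) ENNReal.one_ne_top, ENNReal.toReal_one,
    ENNReal.toReal_pow]

lemma aux_geom {c : ℝ} (hc : 0 < c) (n : ℕ) (y : ℝ) :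
    c ^ (-(n:ℝ)) * Real.exp ((n:ℝ) * y) = (Real.exp y / c) ^ n := by
  rw [Real.rpow_neg hc.le, Real.rpow_natCast, div_pow, ← Real.exp_nat_mul,
    div_eq_mul_inv, mul_comm]

lemma bound_Iic_1 {l s : ℝ} (hl : 0 < l) (n : ℕ) :
    (gammaMeasure ((n:ℝ)+1) 1 (Iic ((n:ℝ)*s))).toReal ≤ (Real.exp (l*s) / (1+l)) ^ n := by
  have hb : (0:ℝ) < 1 + l := by linarith
  refine (aux_Iic (by positivity) hl).trans ?_
  have e : (1+l) ^ (-((n:ℝ)+1)) * Real.exp (l * ((n:ℝ)*s)) =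
      (1+l)⁻¹ * ((Real.exp (l*s) / (1+l)) ^ n) := by
    rw [show -((n:ℝ)+1) = (-1) + -(n:ℝ) by ring, Real.rpow_add hb, Real.rpow_neg_one,
      mul_assoc, show l * ((n:ℝ)*s) = (n:ℝ)*(l*s) by ring, aux_geom hb n (l*s)]
  rw [e]
  have h2 : (1+l)⁻¹ ≤ 1 := by
    rw [inv_le_one_iff₀]; right; linarith
  nlinarith [pow_nonneg (show (0:ℝ) ≤ Real.exp (l*s)/(1+l) by positivity) n,
    inv_pos.mpr hb]

lemma bound_Ioi_1 {l s : ℝ} (hl0 : 0 < l) (hl1 : l < 1) (n : ℕ) :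
    (gammaMeasure ((n:ℝ)+1) 1 (Ioi ((n:ℝ)*s))).toReal
      ≤ (1-l)⁻¹ * (Real.exp (-(l*s)) / (1-l)) ^ n := by
  have hb : (0:ℝ) < 1 - l := by linarith
  refine (aux_Ioi (by positivity) hl0 hl1).trans ?_
  have e : (1-l) ^ (-((n:ℝ)+1)) * Real.exp (-(l * ((n:ℝ)*s))) =
      (1-l)⁻¹ * ((Real.exp (-(l*s)) / (1-l)) ^ n) := by
    rw [show -((n:ℝ)+1) = (-1) + -(n:ℝ) by ring, Real.rpow_add hb, Real.rpow_neg_one,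
      mul_assoc, show -(l * ((n:ℝ)*s)) = (n:ℝ)*(-(l*s)) by ring, aux_geom hb n (-(l*s))]
  exact e.le

lemma aux_geom2 {c : ℝ} (hc : 0 < c) (n : ℕ) (y : ℝ) :
    c ^ (-(2*(n:ℝ))) * Real.exp ((n:ℝ) * y) = (Real.exp y / c^2) ^ n := by
  have e1 : c ^ (-(2*(n:ℝ))) = (c^2 : ℝ) ^ (-(n:ℝ)) := by
    rw [show -(2*(n:ℝ)) = (2:ℝ) * (-(n:ℝ)) by ring, Real.rpow_mul hc.le,
      show ((2:ℝ)) = ((2:ℕ):ℝ) by norm_num, Real.rpow_natCast]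
  rw [e1, aux_geom (by positivity) n y]

lemma bound_Iic_2 {m s : ℝ} (hm : 0 < m) (n : ℕ) (hn : 1 ≤ n) :
    (gammaMeasure (2*(n:ℝ)) 1 (Iic ((n:ℝ)*s))).toReal ≤ (Real.exp (m*s) / (1+m)^2) ^ n := by
  have hb : (0:ℝ) < 1 + m := by linarith
  have hn' : (0:ℝ) < n := by exact_mod_cast hn
  refine (aux_Iic (by positivity) hm).trans ?_
  rw [show m * ((n:ℝ)*s) = (n:ℝ)*(m*s) by ring, aux_geom2 hb n (m*s)]

lemma bound_Ioi_2 {m s : ℝ} (hm0 : 0 < m) (hm1 : m < 1) (n : ℕ) (hn : 1 ≤ n) :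
    (gammaMeasure (2*(n:ℝ)) 1 (Ioi ((n:ℝ)*s))).toReal
      ≤ (Real.exp (-(m*s)) / (1-m)^2) ^ n := by
  have hb : (0:ℝ) < 1 - m := by linarith
  have hn' : (0:ℝ) < n := by exact_mod_cast hn
  refine (aux_Ioi (by positivity) hm0 hm1).trans ?_
  rw [show -(m * ((n:ℝ)*s)) = (n:ℝ)*(-(m*s)) by ring, aux_geom2 hb n (-(m*s))]

theorem max_mixture_tail_asymptotics
    {α : Type*} [MeasurableSpace α] (μ : Measure α) [IsProbabilityMeasure μ]
    (τ : (n : ℕ) → Fin n → α → ℝ) (hmeas : ∀ n i, Measurable (τ n i))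
    (hindep : ∀ n : ℕ, iIndepFun (τ n) μ)
    (hlaw : ∀ n : ℕ, ∀ i : Fin n, μ.map (τ n i) = mixtureLaw n)
    (T : (n : ℕ) → α → ℝ) (hT : ∀ n ω, T n ω = ⨆ i : Fin n, τ n i ω) (s : ℝ) :
    (s < 1 → Tendsto (fun n : ℕ =>
        (μ {ω | (n : ℝ) * s < T n ω}).toReal) atTop (nhds 1)) ∧
    (1 < s → s < 2 → Tendsto (fun n : ℕ =>
        (μ {ω | (n : ℝ) * s < T n ω}).toReal) atTop (nhds (1 - Real.exp (-1)))) ∧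
    (2 < s → Tendsto (fun n : ℕ =>
        (μ {ω | (n : ℝ) * s < T n ω}).toReal) atTop (nhds 0)) := by
  set u : ℕ → ℝ := fun n => (mixtureLaw n (Iic ((n:ℝ)*s))).toReal with hu_def
  set p : ℕ → ℝ := fun n => (mixtureLaw n (Ioi ((n:ℝ)*s))).toReal with hp_def
  have hkey : ∀ n : ℕ, 1 ≤ n → (μ {ω | (n:ℝ)*s < T n ω}).toReal = 1 - (u n)^n := by
    intro n hn
    have hsetT : {ω | (n:ℝ)*s < T n ω} = {ω | (n:ℝ)*s < ⨆ i, τ n i ω} := by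
      ext ω; rw [Set.mem_setOf_eq, Set.mem_setOf_eq, hT]
    rw [hsetT]
    exact aux_key μ n hn (τ n) (hmeas n) (hindep n) (hlaw n) _
  have hu0 : ∀ n, 0 ≤ u n := fun n => ENNReal.toReal_nonneg
  have hu1 : ∀ n, 1 ≤ n → u n ≤ 1 := by
    intro n hn
    haveI := mixtureLaw_isProb n hn
    calc u n ≤ (1 : ℝ≥0∞).toReal := ENNReal.toReal_mono ENNReal.one_ne_top prob_le_one
      _ = 1 := ENNReal.toReal_one
  have hup : ∀ n, 1 ≤ n → p n = 1 - u n := by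
    intro n hn
    haveI := mixtureLaw_isProb n hn
    have h1 := prob_compl_eq_one_sub (μ := mixtureLaw n) (measurableSet_Iic (a := (n:ℝ)*s))
    rw [compl_Iic] at h1
    show (mixtureLaw n (Ioi ((n:ℝ)*s))).toReal = 1 - u n
    rw [h1, ENNReal.toReal_sub_of_le prob_le_one ENNReal.one_ne_top, ENNReal.toReal_one]
  have hnp : ∀ n : ℕ, 1 ≤ n → (n:ℝ) * p n
      = (gammaMeasure (2*(n:ℝ)) 1 (Ioi ((n:ℝ)*s))).toReal
        + ((n:ℝ)-1) * (gammaMeasure ((n:ℝ)+1) 1 (Ioi ((n:ℝ)*s))).toReal := by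
    intro n hn
    have hn' : (0:ℝ) < n := by exact_mod_cast hn
    show (n:ℝ) * (mixtureLaw n (Ioi ((n:ℝ)*s))).toReal = _
    rw [mixtureLaw_decomp n hn]
    field_simp
  refine ⟨?_, ?_, ?_⟩
  · -- s < 1
    intro hs
    obtain ⟨l, hl0, hl⟩ := aux_exists_lt hs
    set ρ : ℝ := Real.exp (l*s) / (1+l) with hρ
    have hbpos : (0:ℝ) < 1 + l := by linarith
    have hρ0 : 0 ≤ ρ := by positivity
    have hρ1 : ρ < 1 := (div_lt_one hbpos).mpr hl
    have hub : ∀ n:ℕ, 1 ≤ n → u n ≤ 1/(n:ℝ) + ρ^n := by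
      intro n hn
      have hn' : (0:ℝ) < n := by exact_mod_cast hn
      haveI i2 : IsProbabilityMeasure (gammaMeasure (2 * (n:ℝ)) 1) :=
        isProbabilityMeasure_gammaMeasure (by linarith) one_pos
      have hG2 : (gammaMeasure (2*(n:ℝ)) 1 (Iic ((n:ℝ)*s))).toReal ≤ 1 := by
        calc _ ≤ (1 : ℝ≥0∞).toReal := ENNReal.toReal_mono ENNReal.one_ne_top prob_le_one
          _ = 1 := ENNReal.toReal_one
      have hG1 : (gammaMeasure ((n:ℝ)+1) 1 (Iic ((n:ℝ)*s))).toReal ≤ ρ^n := bound_Iic_1 hl0 n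
      show (mixtureLaw n (Iic ((n:ℝ)*s))).toReal ≤ _
      rw [mixtureLaw_decomp n hn]
      have hc1 : 0 ≤ 1/(n:ℝ) := by positivity
      have hc2 : 1/(n:ℝ) ≤ 1 := by rw [div_le_one hn']; exact_mod_cast hn
      have hg1 : 0 ≤ (gammaMeasure ((n:ℝ)+1) 1 (Iic ((n:ℝ)*s))).toReal := ENNReal.toReal_nonneg
      have hg2 : 0 ≤ (gammaMeasure (2*(n:ℝ)) 1 (Iic ((n:ℝ)*s))).toReal := ENNReal.toReal_nonneg
      nlinarith [pow_nonneg hρ0 n]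
    have huton : Tendsto (fun n => u n ^ n) atTop (nhds 0) := by
      have haux : Tendsto (fun n : ℕ => 1/(n:ℝ) + ρ^n) atTop (nhds 0) := by
        have := tendsto_one_div_atTop_nhds_zero_nat.add
          (tendsto_pow_atTop_nhds_zero_of_lt_one hρ0 hρ1)
        simpa using this
      have hev : ∀ᶠ n in atTop, u n ≤ 1/2 := by
        filter_upwards [haux.eventually_le_const (by norm_num : (0:ℝ) < 1/2),
          eventually_ge_atTop 1] with n h1 h2
        exact (hub n h2).trans h1
      apply squeeze_zero' ?_ ?_
        (tendsto_pow_atTop_nhds_zero_of_lt_one (by norm_num : (0:ℝ) ≤ 1/2) (by norm_num))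
      · filter_upwards with n; exact pow_nonneg (hu0 n) n
      · filter_upwards [hev] with n h1
        exact pow_le_pow_left₀ (hu0 n) h1 n
    have hfin : Tendsto (fun n : ℕ => 1 - u n ^ n) atTop (nhds 1) := by
      have := tendsto_const_nhds (x := (1:ℝ)) (f := atTop (α := ℕ)) |>.sub huton
      simpa using this
    apply hfin.congr'
    filter_upwards [eventually_ge_atTop 1] with n hn
    exact (hkey n hn).symm
  · -- 1 < s < 2
    intro hs1 hs2
    obtain ⟨l, hl0, hl1, hl⟩ := aux_exists_gt hs1
    obtain ⟨m, hm0, hm⟩ := aux_exists_lt (show s/2 < 1 by linarith)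
    have hmb : (0:ℝ) < 1 + m := by linarith
    set ρ1 : ℝ := Real.exp (-(l*s)) / (1-l) with hρ1_def
    set ρ2 : ℝ := Real.exp (m*s) / (1+m)^2 with hρ2_def
    have hlb : (0:ℝ) < 1 - l := by linarith
    have hρ10 : 0 ≤ ρ1 := by positivity
    have hρ11 : ρ1 < 1 := (div_lt_one hlb).mpr hl
    have hρ20 : 0 ≤ ρ2 := by positivity
    have hρ21 : ρ2 < 1 := by
      rw [hρ2_def, div_lt_one (by positivity)]
      have e : Real.exp (m*s) = Real.exp (m*(s/2)) ^ 2 := by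
        rw [sq, ← Real.exp_add]; congr 1; ring
      rw [e, sq, sq]
      exact mul_self_lt_mul_self (Real.exp_pos _).le hm
    -- G2 Ioi tends to 1
    have hG2 : Tendsto (fun n : ℕ =>
        (gammaMeasure (2*(n:ℝ)) 1 (Ioi ((n:ℝ)*s))).toReal) atTop (nhds 1) := by
      apply tendsto_of_tendsto_of_tendsto_of_le_of_le' (g := fun n : ℕ => 1 - ρ2^n)
        (h := fun _ : ℕ => (1:ℝ))
      · have := tendsto_const_nhds (x := (1:ℝ)) (f := atTop (α := ℕ)) |>.sub
          (tendsto_pow_atTop_nhds_zero_of_lt_one hρ20 hρ21)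
        simpa using this
      · exact tendsto_const_nhds
      · filter_upwards [eventually_ge_atTop 1] with n hn
        have hn' : (0:ℝ) < n := by exact_mod_cast hn
        haveI i2 : IsProbabilityMeasure (gammaMeasure (2 * (n:ℝ)) 1) :=
          isProbabilityMeasure_gammaMeasure (by linarith) one_pos
        have hcompl := prob_compl_eq_one_sub (μ := gammaMeasure (2*(n:ℝ)) 1)
          (measurableSet_Iic (a := (n:ℝ)*s))
        rw [compl_Iic] at hcompl
        have : (gammaMeasure (2*(n:ℝ)) 1 (Ioi ((n:ℝ)*s))).toReal
            = 1 - (gammaMeasure (2*(n:ℝ)) 1 (Iic ((n:ℝ)*s))).toReal := by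
          rw [hcompl, ENNReal.toReal_sub_of_le prob_le_one ENNReal.one_ne_top,
            ENNReal.toReal_one]
        rw [this]
        have := bound_Iic_2 (s := s) hm0 n hn
        linarith
      · filter_upwards [eventually_ge_atTop 1] with n hn
        have hn' : (0:ℝ) < n := by exact_mod_cast hn
        haveI i2 : IsProbabilityMeasure (gammaMeasure (2 * (n:ℝ)) 1) :=
          isProbabilityMeasure_gammaMeasure (by linarith) one_pos
        calc _ ≤ (1 : ℝ≥0∞).toReal := ENNReal.toReal_mono ENNReal.one_ne_top prob_le_one
          _ = 1 := ENNReal.toReal_one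
    -- (n-1) * G1 Ioi tends to 0
    have hG1 : Tendsto (fun n : ℕ =>
        ((n:ℝ)-1) * (gammaMeasure ((n:ℝ)+1) 1 (Ioi ((n:ℝ)*s))).toReal) atTop (nhds 0) := by
      refine squeeze_zero' (g := fun n : ℕ => (1-l)⁻¹ * ((n:ℝ) * ρ1^n)) ?_ ?_ ?_
      · filter_upwards [eventually_ge_atTop 1] with n hn
        have hn' : (1:ℝ) ≤ n := by exact_mod_cast hn
        exact mul_nonneg (by linarith) ENNReal.toReal_nonneg
      · filter_upwards [eventually_ge_atTop 1] with n hn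
        have hn' : (1:ℝ) ≤ n := by exact_mod_cast hn
        calc ((n:ℝ)-1) * (gammaMeasure ((n:ℝ)+1) 1 (Ioi ((n:ℝ)*s))).toReal
            ≤ (n:ℝ) * ((1-l)⁻¹ * ρ1^n) := by
              apply mul_le_mul (by linarith) (bound_Ioi_1 hl0 hl1 n)
                ENNReal.toReal_nonneg (by linarith)
          _ = (1-l)⁻¹ * ((n:ℝ) * ρ1^n) := by ring
      · have := (tendsto_self_mul_const_pow_of_lt_one hρ10 hρ11).const_mul ((1-l)⁻¹)
        simpa using this
    have hnp1 : Tendsto (fun n : ℕ => (n:ℝ) * p n) atTop (nhds 1) := by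
      have hsum := hG2.add hG1
      rw [add_zero] at hsum
      apply hsum.congr'
      filter_upwards [eventually_ge_atTop 1] with n hn
      exact (hnp n hn).symm
    have hpow := aux_pow_exp (p := p) (c := 1) ?_ hnp1
    · have hfin : Tendsto (fun n : ℕ => 1 - (1 - p n) ^ n) atTop
          (nhds (1 - Real.exp (-1))) := by
        have := tendsto_const_nhds (x := (1:ℝ)) (f := atTop (α := ℕ)) |>.sub hpow
        simpa using this
      apply hfin.congr'
      filter_upwards [eventually_ge_atTop 1] with n hn
      rw [hkey n hn, hup n hn]
      ring_nf
    · filter_upwards [eventually_ge_atTop 1] with n hn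
      rw [hup n hn]
      linarith [hu0 n]
  · -- 2 < s
    intro hs
    obtain ⟨l, hl0, hl1, hl⟩ := aux_exists_gt (show 1 < s by linarith)
    obtain ⟨m, hm0, hm1, hm⟩ := aux_exists_gt (show 1 < s/2 by linarith)
    have hlb : (0:ℝ) < 1 - l := by linarith
    have hmb : (0:ℝ) < 1 - m := by linarith
    set ρ1 : ℝ := Real.exp (-(l*s)) / (1-l) with hρ1_def
    set ρ3 : ℝ := Real.exp (-(m*s)) / (1-m)^2 with hρ3_def
    have hρ10 : 0 ≤ ρ1 := by positivity
    have hρ11 : ρ1 < 1 := (div_lt_one hlb).mpr hl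
    have hρ30 : 0 ≤ ρ3 := by positivity
    have hρ31 : ρ3 < 1 := by
      rw [hρ3_def, div_lt_one (by positivity)]
      have e : Real.exp (-(m*s)) = Real.exp (-(m*(s/2))) ^ 2 := by
        rw [sq, ← Real.exp_add]; congr 1; ring
      rw [e, sq, sq]
      exact mul_self_lt_mul_self (Real.exp_pos _).le hm
    have hnp0 : Tendsto (fun n : ℕ => (n:ℝ) * p n) atTop (nhds 0) := by
      refine squeeze_zero' (g := fun n : ℕ => ρ3^n + (1-l)⁻¹ * ((n:ℝ) * ρ1^n)) ?_ ?_ ?_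
      · filter_upwards [eventually_ge_atTop 1] with n hn
        have hn' : (0:ℝ) ≤ n := by positivity
        exact mul_nonneg hn' ENNReal.toReal_nonneg
      · filter_upwards [eventually_ge_atTop 1] with n hn
        have hn' : (1:ℝ) ≤ n := by exact_mod_cast hn
        rw [hnp n hn]
        have b2 := bound_Ioi_2 (s := s) hm0 hm1 n hn
        have b1 : ((n:ℝ)-1) * (gammaMeasure ((n:ℝ)+1) 1 (Ioi ((n:ℝ)*s))).toReal
            ≤ (1-l)⁻¹ * ((n:ℝ) * ρ1^n) := by
          calc ((n:ℝ)-1) * (gammaMeasure ((n:ℝ)+1) 1 (Ioi ((n:ℝ)*s))).toReal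
              ≤ (n:ℝ) * ((1-l)⁻¹ * ρ1^n) := by
                apply mul_le_mul (by linarith) (bound_Ioi_1 hl0 hl1 n)
                  ENNReal.toReal_nonneg (by linarith)
            _ = (1-l)⁻¹ * ((n:ℝ) * ρ1^n) := by ring
        linarith
      · have h1 := tendsto_pow_atTop_nhds_zero_of_lt_one hρ30 hρ31
        have h2 := (tendsto_self_mul_const_pow_of_lt_one hρ10 hρ11).const_mul ((1-l)⁻¹)
        have := h1.add h2
        simpa using this
    apply squeeze_zero' ?_ ?_ hnp0
    · filter_upwards [eventually_ge_atTop 1] with n hn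
      rw [hkey n hn]
      have : u n ^ n ≤ 1 := pow_le_one₀ (hu0 n) (hu1 n hn)
      linarith
    · filter_upwards [eventually_ge_atTop 1] with n hn
      rw [hkey n hn]
      have hb : (-2:ℝ) ≤ -(p n) := by
        have := hup n hn
        have := hu1 n hn
        linarith [hu0 n, hu1 n hn, hup n hn]
      have := one_add_mul_le_pow hb n
      have hue : u n = 1 + -(p n) := by rw [hup n hn]; ring
      rw [hue]
      have hnn : 1 + (n:ℝ) * (-(p n)) ≤ (1 + -(p n))^n := this
      nlinarith
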